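/- Let H be a complex Hilbert space, let T and T̂ be positive bounded linear operators on H, and let λ > 0. Assume ‖(T − T̂) ∘ (T + λ·1)⁻¹‖ ≤ 3/4. Then T̂ + λ·1 is invertible and ‖√T ∘ (T̂ + λ·1)⁻¹‖ ≤ 2/√λ, where √T is the positive square root of T and ‖·‖ is the operator norm. -/

import Mathlib

set_option synthInstance.maxHeartbeats 1000000
set_option maxHeartbeats 1000000

section Aux

variable {H : Type*} [NormedAddCommGroup H] [InnerProductSpace ℂ H] [CompleteSpace H]

lemma aux_shift_eq_cfc (T : H →L[ℂ] H) (hT : T.IsPositive) (lam : ℝ) :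
    T + (lam : ℂ) • (1 : H →L[ℂ] H) = cfc (fun t : ℝ => t + lam) T := by
  have hsa : IsSelfAdjoint T := hT.isSelfAdjoint
  rw [cfc_add (f := fun t : ℝ => t) (g := fun _ : ℝ => lam) T (by fun_prop) (by fun_prop),
    cfc_id' ℝ T, cfc_const lam T, Algebra.algebraMap_eq_smul_one, Complex.coe_smul]

lemma aux_ne_zero_on_spectrum (T : H →L[ℂ] H) (hT : T.IsPositive) {lam : ℝ} (hlam : 0 < lam) :
    ∀ x ∈ spectrum ℝ T, x + lam ≠ 0 := by
  intro x hx
  have h0 : (0 : H →L[ℂ] H) ≤ T := (ContinuousLinearMap.nonneg_iff_isPositive T).mpr hT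
  have := spectrum_nonneg_of_nonneg h0 hx
  positivity

lemma aux_isUnit_shift (T : H →L[ℂ] H) (hT : T.IsPositive) {lam : ℝ} (hlam : 0 < lam) :
    IsUnit (T + (lam : ℂ) • (1 : H →L[ℂ] H)) := by
  have hsa : IsSelfAdjoint T := hT.isSelfAdjoint
  rw [aux_shift_eq_cfc T hT lam]
  exact isUnit_cfc (fun t : ℝ => t + lam) T (by fun_prop) hsa
    (aux_ne_zero_on_spectrum T hT hlam)

lemma aux_inverse_shift (T : H →L[ℂ] H) (hT : T.IsPositive) {lam : ℝ} (hlam : 0 < lam) :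
    Ring.inverse (T + (lam : ℂ) • (1 : H →L[ℂ] H)) = cfc (fun t : ℝ => (t + lam)⁻¹) T := by
  have hsa : IsSelfAdjoint T := hT.isSelfAdjoint
  rw [aux_shift_eq_cfc T hT lam,
    ← cfc_inv (fun t : ℝ => t + lam) T (aux_ne_zero_on_spectrum T hT hlam) (by fun_prop) hsa]

lemma aux_sqrt_mul_inverse_bound (T : H →L[ℂ] H) (hT : T.IsPositive) {lam : ℝ}
    (hlam : 0 < lam) :
    ‖CFC.sqrt T * Ring.inverse (T + (lam : ℂ) • (1 : H →L[ℂ] H))‖ ≤ 1 / (2 * Real.sqrt lam) := by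
  have hsa : IsSelfAdjoint T := hT.isSelfAdjoint
  have h0 : (0 : H →L[ℂ] H) ≤ T := (ContinuousLinearMap.nonneg_iff_isPositive T).mpr hT
  have hsqrt : CFC.sqrt T = cfc Real.sqrt T := by
    rw [CFC.sqrt_eq_cfc, cfc_nnreal_eq_real NNReal.sqrt T h0]
    refine cfc_congr fun x hx => ?_
    have hx0 : 0 ≤ x := spectrum_nonneg_of_nonneg h0 hx
    rw [Real.coe_sqrt, Real.coe_toNNReal x hx0]
  have hcont : ContinuousOn (fun t : ℝ => (t + lam)⁻¹) (spectrum ℝ T) :=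
    ((continuous_id.add continuous_const).continuousOn).inv₀
      (aux_ne_zero_on_spectrum T hT hlam)
  rw [aux_inverse_shift T hT hlam, hsqrt,
    ← cfc_mul (fun t : ℝ => Real.sqrt t) (fun t : ℝ => (t + lam)⁻¹) T
      Real.continuous_sqrt.continuousOn hcont]
  have hc : (0:ℝ) ≤ 1 / (2 * Real.sqrt lam) := by positivity
  refine norm_cfc_le hc fun x hx => ?_
  have hx0 : 0 ≤ x := spectrum_nonneg_of_nonneg h0 hx
  have hsx : Real.sqrt x ^ 2 = x := Real.sq_sqrt hx0
  have hsl : Real.sqrt lam ^ 2 = lam := Real.sq_sqrt hlam.le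
  have hsl0 : 0 < Real.sqrt lam := Real.sqrt_pos.mpr hlam
  have hxlam : 0 < x + lam := by positivity
  have hkey : Real.sqrt x * (x + lam)⁻¹ ≤ 1 / (2 * Real.sqrt lam) := by
    rw [← div_eq_mul_inv, div_le_div_iff₀ hxlam (by positivity)]
    nlinarith [sq_nonneg (Real.sqrt x - Real.sqrt lam), Real.sqrt_nonneg x, hsx, hsl,
      hsl0.le]
  have hnn : 0 ≤ Real.sqrt x * (x + lam)⁻¹ := by positivity
  rw [Real.norm_eq_abs, abs_of_nonneg hnn]
  exact hkey

end Aux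

/-- **Neumann-series estimate.** Let `T` and `T̂` be positive bounded operators on a
complex Hilbert space and `λ > 0`. If `‖(T − T̂) ∘ (T + λ·1)⁻¹‖ ≤ 3/4`, then `T̂ + λ·1`
is invertible and `‖√T ∘ (T̂ + λ·1)⁻¹‖ ≤ 2/√λ`, where `√T = CFC.sqrt T` is the positive
square root of `T` and `‖·‖` is the operator norm. -/
theorem sqrt_comp_perturbed_resolvent_bound
    {H : Type*} [NormedAddCommGroup H] [InnerProductSpace ℂ H] [CompleteSpace H]
    (T That : H →L[ℂ] H) (hT : T.IsPositive) (hThat : That.IsPositive)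
    (lam : ℝ) (hlam : 0 < lam)
    (hnorm : ‖(T - That) * Ring.inverse (T + (lam : ℂ) • (1 : H →L[ℂ] H))‖ ≤ 3 / 4) :
    IsUnit (That + (lam : ℂ) • (1 : H →L[ℂ] H)) ∧
    ‖CFC.sqrt T * Ring.inverse (That + (lam : ℂ) • (1 : H →L[ℂ] H))‖ ≤
      2 / Real.sqrt lam := by
  set A : H →L[ℂ] H := T + (lam : ℂ) • (1 : H →L[ℂ] H) with hA
  set X : H →L[ℂ] H := (T - That) * Ring.inverse A with hXdef
  have hAunit : IsUnit A := aux_isUnit_shift T hT hlam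
  have hXlt : ‖X‖ < 1 := lt_of_le_of_lt hnorm (by norm_num)
  have h1Xunit : IsUnit (1 - X) := isUnit_one_sub_of_norm_lt_one hXlt
  have hfact : That + (lam : ℂ) • (1 : H →L[ℂ] H) = (1 - X) * A := by
    have : X * A = T - That := by
      rw [hXdef, mul_assoc, Ring.inverse_mul_cancel _ hAunit, mul_one]
    rw [sub_mul, one_mul, this, hA]
    abel
  have hunit : IsUnit (That + (lam : ℂ) • (1 : H →L[ℂ] H)) := by
    rw [hfact]; exact h1Xunit.mul hAunit
  refine ⟨hunit, ?_⟩
  -- inverse of product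
  obtain ⟨u, hu⟩ := h1Xunit
  obtain ⟨v, hv⟩ := hAunit
  have hinv : Ring.inverse (That + (lam : ℂ) • (1 : H →L[ℂ] H)) =
      Ring.inverse A * Ring.inverse (1 - X) := by
    rw [hfact, ← hu, ← hv, ← Units.val_mul, Ring.inverse_unit, Ring.inverse_unit,
      Ring.inverse_unit, mul_inv_rev, Units.val_mul]
  have hgeom : ‖Ring.inverse (1 - X)‖ ≤ 4 := by
    rw [← geom_series_eq_inverse X hXlt]
    refine le_trans (tsum_geometric_le_of_norm_lt_one X hXlt) ?_
    have h34 : ‖X‖ ≤ 3 / 4 := hnorm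
    have h14 : (1:ℝ)/4 ≤ 1 - ‖X‖ := by linarith
    have h1le : ‖(1 : H →L[ℂ] H)‖ ≤ 1 := ContinuousLinearMap.norm_id_le
    have h4 : (1 - ‖X‖)⁻¹ ≤ 4 := by
      rw [show (4:ℝ) = ((1:ℝ)/4)⁻¹ by norm_num]
      gcongr
    linarith
  have hbound := aux_sqrt_mul_inverse_bound T hT hlam
  calc ‖CFC.sqrt T * Ring.inverse (That + (lam : ℂ) • (1 : H →L[ℂ] H))‖
      = ‖CFC.sqrt T * Ring.inverse A * Ring.inverse (1 - X)‖ := by rw [hinv, mul_assoc]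
    _ ≤ ‖CFC.sqrt T * Ring.inverse A‖ * ‖Ring.inverse (1 - X)‖ := norm_mul_le _ _
    _ ≤ (1 / (2 * Real.sqrt lam)) * 4 := by
        refine mul_le_mul hbound hgeom (norm_nonneg _) (by positivity)
    _ = 2 / Real.sqrt lam := by
        have : Real.sqrt lam ≠ 0 := ne_of_gt (Real.sqrt_pos.mpr hlam)
        field_simp
        ring
  done
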